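/- Let A = (a_n) and B = (b_n) be Waterman sequences with B proper. The following are equivalent: (a) I_A ≤_K I_{B^M} for some increasing sequence M = (m_k) of natural numbers; (b) ∑_{k=1}^n b_k = o(∑_{k=1}^n a_k), i.e. lim_{n→∞} (∑_{k=1}^n b_k)/(∑_{k=1}^n a_k) = 0. -/

import Mathlib

open Filter Set
open scoped ENNReal

/-- A Waterman sequence: a nonincreasing sequence of positive reals whose series diverges. -/
def IsWaterman (a : ℕ → ℝ) : Prop :=
  Antitone a ∧ (∀ n, 0 < a n) ∧ ¬ Summable a

/-- A Waterman sequence is proper if it moreover tends to zero. -/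
def IsProperWaterman (a : ℕ → ℝ) : Prop :=
  IsWaterman a ∧ Tendsto a atTop (nhds 0)

/-- An admissible sequence of nonoverlapping closed subintervals `[s n, t n]` of `[0,1]`:
the intervals are contained in `[0,1]` and have pairwise disjoint interiors. -/
def Nonoverlapping (s t : ℕ → ℝ) : Prop :=
  (∀ n, 0 ≤ s n ∧ s n ≤ t n ∧ t n ≤ 1) ∧
  Pairwise fun m n => Disjoint (Set.Ioo (s m) (t m)) (Set.Ioo (s n) (t n))

/-- The `A`-variation (in the sense of Waterman) of `x` on `[0,1]`, with values in `[0,∞]`. -/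
noncomputable def eVar (a : ℕ → ℝ) (x : ℝ → ℝ) : ℝ≥0∞ :=
  ⨆ p : {p : (ℕ → ℝ) × (ℕ → ℝ) // Nonoverlapping p.1 p.2},
    ∑' n, ENNReal.ofReal (a n * |x (p.1.2 n) - x (p.1.1 n)|)

/-- Membership in the space `ABV` of functions of bounded `A`-variation. -/
def MemABV (a : ℕ → ℝ) (x : ℝ → ℝ) : Prop := eVar a x < ⊤

/-- The norm `‖x‖_{ABV} = |x(0)| + var_A(x)`, with values in `[0,∞]`. -/
noncomputable def eNormABV (a : ℕ → ℝ) (x : ℝ → ℝ) : ℝ≥0∞ :=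
  ENNReal.ofReal |x 0| + eVar a x

/-- The supremum norm of `x` on `[0,1]`, with values in `[0,∞]`. -/
noncomputable def eSupNorm (x : ℝ → ℝ) : ℝ≥0∞ :=
  ⨆ t ∈ Set.Icc (0 : ℝ) 1, ENNReal.ofReal |x t|

/-- `x` is bounded on `[0,1]`. -/
def BoundedOn01 (x : ℝ → ℝ) : Prop := ∃ C : ℝ, ∀ t ∈ Set.Icc (0 : ℝ) 1, |x t| ≤ C

/-- `K` is relatively compact with respect to the supremum norm on `[0,1]`: every sequence
in `K` has a subsequence converging in the supremum norm to some bounded function. -/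
def RelCompSup (K : Set (ℝ → ℝ)) : Prop :=
  ∀ u : ℕ → ℝ → ℝ, (∀ j, u j ∈ K) →
    ∃ φ : ℕ → ℕ, StrictMono φ ∧ ∃ x : ℝ → ℝ, BoundedOn01 x ∧
      Tendsto (fun k => eSupNorm (u (φ k) - x)) atTop (nhds 0)

/-- `K` is relatively compact in the norm of the space `BBV` (for the sequence `b`):
every sequence in `K` has a subsequence converging in `‖·‖_{BBV}` to an element of `BBV`. -/
def RelCompABV (b : ℕ → ℝ) (K : Set (ℝ → ℝ)) : Prop :=
  ∀ u : ℕ → ℝ → ℝ, (∀ j, u j ∈ K) →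
    ∃ φ : ℕ → ℕ, StrictMono φ ∧ ∃ x : ℝ → ℝ, MemABV b x ∧
      Tendsto (fun k => eNormABV b (u (φ k) - x)) atTop (nhds 0)

/-- `K` is a bounded subset of `ABV`. -/
def BddInABV (a : ℕ → ℝ) (K : Set (ℝ → ℝ)) : Prop :=
  ∃ M : ℝ≥0∞, M < ⊤ ∧ ∀ x ∈ K, eNormABV a x ≤ M

/-- `∑_{k=1}^n b_k = o(∑_{k=1}^n a_k)`. -/
def PartialSumsLittleO (a b : ℕ → ℝ) : Prop :=
  Tendsto (fun n => (∑ k ∈ Finset.range n, b k) / (∑ k ∈ Finset.range n, a k))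
    atTop (nhds 0)

/-- Condition (b): for every `ε > 0` there is `k₀` such that for every nonincreasing
nonnegative sequence `c` tending to `0` with `∑ aₙcₙ < ∞` one has
`∑_{n>k₀} bₙcₙ ≤ ε ∑ₙ aₙcₙ`. -/
def SmallTailCond (a b : ℕ → ℝ) : Prop :=
  ∀ ε : ℝ, 0 < ε → ∃ k₀ : ℕ, ∀ c : ℕ → ℝ,
    (∀ n, 0 ≤ c n) → Antitone c → Tendsto c atTop (nhds 0) →
    (∑' n, ENNReal.ofReal (a n * c n)) < ⊤ →
    (∑' n, ENNReal.ofReal (b (n + k₀) * c (n + k₀))) ≤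
      ENNReal.ofReal ε * ∑' n, ENNReal.ofReal (a n * c n)

/-- The compact-embedding property from `ABV` into `BBV`: every bounded subset of `ABV`
which is relatively compact in the supremum norm is contained in `BBV` and relatively
compact there. -/
def CompactEmbeddingABV (a b : ℕ → ℝ) : Prop :=
  ∀ K : Set (ℝ → ℝ), (∀ x ∈ K, MemABV a x) → BddInABV a K → RelCompSup K →
    (∀ x ∈ K, MemABV b x) ∧ RelCompABV b K

/-- The summable ideal `I_A = {C ⊆ ℕ : ∑_{n ∈ C} a_n < ∞}` (as a family of sets;
it may equal `P(ℕ)` when `∑ a_n < ∞`). -/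
def IdealOf (a : ℕ → ℝ) : Set (Set ℕ) := {C : Set ℕ | Summable fun n : C => a n}

/-- The Katětov order on families of subsets of `ℕ`. -/
def KatetovLE (I J : Set (Set ℕ)) : Prop :=
  ∃ f : ℕ → ℕ, ∀ C ∈ I, f ⁻¹' C ∈ J

/-- Given a sequence `b` and an increasing sequence `m` of naturals, the sequence `b^M`,
whose `n`-th term is `k·bₙ` where `k` is the number of indices `j` with `m j ≤ n`
(and `bₙ` itself if `n` is below all of `m`). -/
def seqM (b : ℕ → ℝ) (m : ℕ → ℕ) (n : ℕ) : ℝ :=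
  ((max 1 (((Finset.range (n + 1)).filter fun j => m j ≤ n).card) : ℕ) : ℝ) * b n

/-- An admissible `n`-tuple of nonoverlapping closed subintervals of `[0,1]`. -/
def NonoverlappingFin {n : ℕ} (s t : Fin n → ℝ) : Prop :=
  (∀ i, 0 ≤ s i ∧ s i ≤ t i ∧ t i ≤ 1) ∧
  Pairwise fun i j => Disjoint (Set.Ioo (s i) (t i)) (Set.Ioo (s j) (t j))

/-- The modulus of variation of Chanturia: `v(x,n)` is the supremum of `∑_{k=1}^n |x(I_k)|`
over all `n`-tuples of nonoverlapping closed subintervals of `[0,1]`. -/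
noncomputable def modVar (x : ℝ → ℝ) (n : ℕ) : ℝ≥0∞ :=
  ⨆ p : {p : (Fin n → ℝ) × (Fin n → ℝ) // NonoverlappingFin p.1 p.2},
    ENNReal.ofReal (∑ i, |x (p.1.2 i) - x (p.1.1 i)|)

/-- Membership in the Chanturia class `V[g(n)]`: `x` is bounded and `v(x,n) = O(g(n))`. -/
def MemChanturia (g : ℕ → ℝ) (x : ℝ → ℝ) : Prop :=
  BoundedOn01 x ∧ ∃ η : ℝ, 0 < η ∧ ∀ n, modVar x n ≤ ENNReal.ofReal (η * g n)

/-- The norm `‖x‖_{φ_g} = |x(0)| + sup_n v(x,n)/g(n)` of the Chanturia class. -/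
noncomputable def eNormChan (g : ℕ → ℝ) (x : ℝ → ℝ) : ℝ≥0∞ :=
  ENNReal.ofReal |x 0| + ⨆ n, modVar x n / ENNReal.ofReal (g n)

/-- The family `𝒢`: positive, nondecreasing `g` tending to `∞` with `n/g(n)`
nondecreasing and tending to `∞`. -/
def MemG (g : ℕ → ℝ) : Prop :=
  (∀ n, 0 < g n) ∧ Monotone g ∧ Tendsto g atTop atTop ∧
  Monotone (fun n : ℕ => (n : ℝ) / g n) ∧ Tendsto (fun n : ℕ => (n : ℝ) / g n) atTop atTop

/-- `K` is a bounded subset of the Chanturia class `V[g(n)]`. -/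
def BddInChan (g : ℕ → ℝ) (K : Set (ℝ → ℝ)) : Prop :=
  ∃ M : ℝ≥0∞, M < ⊤ ∧ ∀ x ∈ K, eNormChan g x ≤ M

/-- `K` is relatively compact in the norm of the Chanturia class `V[h(n)]`. -/
def RelCompChan (h : ℕ → ℝ) (K : Set (ℝ → ℝ)) : Prop :=
  ∀ u : ℕ → ℝ → ℝ, (∀ j, u j ∈ K) →
    ∃ φ : ℕ → ℕ, StrictMono φ ∧ ∃ x : ℝ → ℝ, MemChanturia h x ∧
      Tendsto (fun k => eNormChan h (u (φ k) - x)) atTop (nhds 0)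

/-- The compact-embedding property from `V[g(n)]` into `V[h(n)]`. -/
def CompactEmbeddingChan (g h : ℕ → ℝ) : Prop :=
  ∀ K : Set (ℝ → ℝ), (∀ x ∈ K, MemChanturia g x) → BddInChan g K → RelCompSup K →
    (∀ x ∈ K, MemChanturia h x) ∧ RelCompChan h K

/-- The submeasure `φ_g(C) = sup_n |C ∩ {0,…,n}| / g(n)`, with values in `[0,∞]`. -/
noncomputable def phiSub (g : ℕ → ℝ) (C : Set ℕ) : ℝ≥0∞ :=
  ⨆ n, ENNReal.ofReal (((C ∩ Set.Iic n).ncard : ℝ) / g n)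

/-- The exhaustive ideal `Exh(φ_g)`. -/
def Exh (g : ℕ → ℝ) : Set (Set ℕ) :=
  {C : Set ℕ | Tendsto (fun k => phiSub g (C \ Set.Iic k)) atTop (nhds 0)}

/-- The characteristic function of `[0,t]`. -/
noncomputable def chi (t : ℝ) : ℝ → ℝ := Set.indicator (Set.Icc 0 t) fun _ => 1

private lemma sum_range_pos {a : ℕ → ℝ} (hpos : ∀ n, 0 < a n) {n : ℕ} (hn : 1 ≤ n) :
    0 < ∑ k ∈ Finset.range n, a k :=
  Finset.sum_pos (fun i _ => hpos i) (Finset.nonempty_range_iff.mpr (by omega))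

private lemma sum_range_strictMono {a : ℕ → ℝ} (hpos : ∀ n, 0 < a n) :
    StrictMono (fun n => ∑ k ∈ Finset.range n, a k) := by
  apply strictMono_nat_of_lt_succ
  intro n
  rw [Finset.sum_range_succ]
  nlinarith [hpos n]

private lemma sum_range_tendsto {a : ℕ → ℝ} (hpos : ∀ n, 0 < a n) (hns : ¬ Summable a) :
    Tendsto (fun n => ∑ k ∈ Finset.range n, a k) atTop atTop :=
  (not_summable_iff_tendsto_nat_atTop_of_nonneg (fun n => (hpos n).le)).mp hns

/-- antitone: (n+1) * a n ≤ partial sum up to n+1 -/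
private lemma antitone_mul_le_sum {a : ℕ → ℝ} (hanti : Antitone a) (n : ℕ) :
    ((n : ℝ) + 1) * a n ≤ ∑ k ∈ Finset.range (n + 1), a k := by
  have := Finset.card_nsmul_le_sum (Finset.range (n + 1)) a (a n)
    (fun x hx => hanti (by simpa using Nat.lt_succ_iff.mp (Finset.mem_range.mp hx)))
  simpa [nsmul_eq_mul, Finset.card_range, add_comm] using this

/-- antitone chunk bound -/
private lemma sum_chunk_le {a : ℕ → ℝ} (hanti : Antitone a) {j n : ℕ} (hjn : j ≤ n) :
    ∑ k ∈ Finset.range n, a k ≤ (∑ k ∈ Finset.range j, a k) + ((n - j : ℕ) : ℝ) * a j := by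
  have h1 : ∑ k ∈ Finset.Ico j n, a k ≤ ((n - j : ℕ) : ℝ) * a j := by
    have := Finset.sum_le_card_nsmul (Finset.Ico j n) a (a j)
      (fun x hx => hanti (Finset.mem_Ico.mp hx).1)
    simpa [nsmul_eq_mul, Nat.card_Ico] using this
  have h2 : ∑ k ∈ Finset.range n, a k
      = (∑ k ∈ Finset.range j, a k) + ∑ k ∈ Finset.Ico j n, a k := by
    rw [Finset.range_eq_Ico, ← Finset.sum_Ico_consecutive a (Nat.zero_le j) hjn]
    rw [Finset.range_eq_Ico]
  linarith

/-- sum of an antitone nonneg sequence over any finset is at most the sum over an initial segment of the same size -/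
private lemma sum_finset_le_sum_range {a : ℕ → ℝ} (hanti : Antitone a) (h0 : ∀ n, 0 ≤ a n)
    (s : Finset ℕ) : ∑ j ∈ s, a j ≤ ∑ i ∈ Finset.range s.card, a i := by
  induction s using Finset.strongInductionOn with
  | _ s ih =>
    rcases s.eq_empty_or_nonempty with rfl | hne
    · simp
    · set M := s.max' hne with hM
      have hMs : M ∈ s := s.max'_mem hne
      have hsub : s.erase M ⊂ s := Finset.erase_ssubset hMs
      have h1 := ih _ hsub
      have hcard : (s.erase M).card = s.card - 1 := Finset.card_erase_of_mem hMs
      have hc1 : 1 ≤ s.card := Finset.card_pos.mpr hne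
      have hMc : s.card - 1 ≤ M := by
        have : s ⊆ Finset.range (M + 1) := by
          intro x hx
          exact Finset.mem_range.mpr (Nat.lt_succ_of_le (s.le_max' x hx))
        have := Finset.card_le_card this
        simp only [Finset.card_range] at this
        omega
      have h2 : a M ≤ a (s.card - 1) := hanti hMc
      have h3 : ∑ j ∈ s, a j = (∑ j ∈ s.erase M, a j) + a M := by
        rw [Finset.sum_erase_add s a hMs]
      have h4 : ∑ i ∈ Finset.range s.card, a i
          = (∑ i ∈ Finset.range (s.card - 1), a i) + a (s.card - 1) := by
        have hc : s.card = (s.card - 1) + 1 := by omega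
        conv_lhs => rw [hc, Finset.sum_range_succ]
      rw [h3, h4]
      rw [hcard] at h1
      linarith

private lemma sum_union_le_nonneg {f : ℕ → ℝ} (h0 : ∀ n, 0 ≤ f n) (s t : Finset ℕ) :
    ∑ x ∈ s ∪ t, f x ≤ ∑ x ∈ s, f x + ∑ x ∈ t, f x := by
  classical
  have h1 : s ∪ t = s ∪ (t \ s) := by
    rw [Finset.union_sdiff_self_eq_union]
  rw [h1, Finset.sum_union (Finset.disjoint_sdiff)]
  have : ∑ x ∈ t \ s, f x ≤ ∑ x ∈ t, f x :=
    Finset.sum_le_sum_of_subset_of_nonneg (Finset.sdiff_subset) (fun i _ _ => h0 i)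
  linarith

private lemma geom_half_sum_le_one (n : ℕ) :
    ∑ K ∈ Finset.range n, ((1:ℝ)/2) ^ (K + 1) ≤ 1 := by
  have h := sum_geometric_two_le n
  have : ∑ K ∈ Finset.range n, ((1:ℝ)/2) ^ (K + 1)
      = (1/2) * ∑ K ∈ Finset.range n, ((1:ℝ)/2) ^ K := by
    rw [Finset.mul_sum]
    exact Finset.sum_congr rfl (fun k _ => by ring)
  rw [this]; linarith

private lemma backward_dir (a b : ℕ → ℝ) (haanti : Antitone a) (hapos : ∀ n, 0 < a n)
    (hans : ¬ Summable a) (hbanti : Antitone b) (hbpos : ∀ n, 0 < b n) (hbns : ¬ Summable b)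
    (hlo : PartialSumsLittleO a b) :
    ∃ m : ℕ → ℕ, StrictMono m ∧ KatetovLE (IdealOf a) (IdealOf (seqM b m)) := by
  classical
  set Sa : ℕ → ℝ := fun n => ∑ k ∈ Finset.range n, a k with hSa_def
  set Sb : ℕ → ℝ := fun n => ∑ k ∈ Finset.range n, b k with hSb_def
  have hSa_pos : ∀ n, 1 ≤ n → 0 < Sa n := fun n hn => sum_range_pos hapos hn
  have hSa_nonneg : ∀ n, 0 ≤ Sa n := fun n =>
    Finset.sum_nonneg (fun i _ => (hapos i).le)
  have hSb_nonneg : ∀ n, 0 ≤ Sb n := fun n =>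
    Finset.sum_nonneg (fun i _ => (hbpos i).le)
  have hSa_mono : StrictMono Sa := sum_range_strictMono hapos
  have hSa_top : Tendsto Sa atTop atTop := sum_range_tendsto hapos hans
  -- step: ratio control
  have hratio : ∀ T : ℕ, ∃ N, ∀ k, N ≤ k → (T : ℝ) * Sb (k + 1) * 4 ≤ Sa k := by
    intro T
    have hhalf : ∀ n, 1 ≤ n → Sa (n + 1) ≤ 2 * Sa n := by
      intro n hn
      have h1 : ((n : ℝ) + 1) * a n ≤ Sa (n + 1) := antitone_mul_le_sum haanti n
      have h2 : Sa (n + 1) = Sa n + a n := Finset.sum_range_succ _ _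
      have h3 : (2 : ℝ) ≤ (n : ℝ) + 1 := by
        have : (1 : ℝ) ≤ (n : ℝ) := by exact_mod_cast hn
        linarith
      nlinarith [hapos n]
    have hcomp : Tendsto (fun n => Sb (n + 1) / Sa (n + 1)) atTop (nhds 0) :=
      hlo.comp (tendsto_add_atTop_nat 1)
    have hc : (0 : ℝ) < 1 / (8 * ((T : ℝ) + 1)) := by positivity
    have hev : ∀ᶠ n in atTop, Sb (n + 1) / Sa (n + 1) < 1 / (8 * ((T : ℝ) + 1)) :=
      hcomp.eventually (gt_mem_nhds hc)
    obtain ⟨N, hN⟩ := eventually_atTop.mp hev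
    refine ⟨max N 1, fun k hk => ?_⟩
    have hk1 : 1 ≤ k := le_trans (le_max_right N 1) hk
    have hkN : N ≤ k := le_trans (le_max_left N 1) hk
    have h2 := hN k hkN
    have hpos1 : 0 < Sa (k + 1) := hSa_pos _ (by omega)
    rw [div_lt_div_iff₀ hpos1 (by positivity)] at h2
    have h3 : Sa (k + 1) ≤ 2 * Sa k := hhalf k hk1
    have hT0 : (0 : ℝ) ≤ (T : ℝ) := Nat.cast_nonneg T
    nlinarith [hSb_nonneg (k + 1), hSa_pos k hk1]
  -- the greatest multiplier availabe at stage n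
  set P : ℕ → ℕ → Prop := fun n t => ∀ k, n ≤ k → (t : ℝ) * Sb (k + 1) * 4 ≤ Sa k
    with hP_def
  set φ : ℕ → ℕ := fun n => Nat.findGreatest (P n) n with hφ_def
  have hφ_le : ∀ n, φ n ≤ n := fun n => Nat.findGreatest_le n
  have hφ_spec : ∀ n, 1 ≤ φ n → P n (φ n) := by
    intro n h1
    have h := (Nat.findGreatest_eq_iff.mp (rfl : Nat.findGreatest (P n) n = φ n)).2.1
    exact h (Nat.one_le_iff_ne_zero.mp h1)
  have hφ_mono : Monotone φ := by
    apply monotone_nat_of_le_succ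
    intro n
    rcases Nat.eq_zero_or_pos (φ n) with h | h
    · omega
    · exact Nat.le_findGreatest (le_trans (hφ_le n) (by omega))
        (fun k hk => hφ_spec n h k (by omega))
  have hφ_unb : ∀ T : ℕ, ∃ N, ∀ n, N ≤ n → T ≤ φ n := by
    intro T
    obtain ⟨N, hN⟩ := hratio T
    refine ⟨max N T, fun n hn => ?_⟩
    have h1 : N ≤ n := le_trans (le_max_left _ _) hn
    have h2 : T ≤ n := le_trans (le_max_right _ _) hn
    exact Nat.le_findGreatest h2 (fun k hk => hN k (le_trans h1 hk))
  set θ : ℕ → ℕ := fun n => max 1 (φ n) with hθ_def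
  have hθ_one : ∀ n, 1 ≤ θ n := fun n => le_max_left _ _
  have hθ_mono : Monotone θ := fun i j hij => max_le_max (le_refl 1) (hφ_mono hij)
  have hθ_key : ∀ n, 1 ≤ φ n → (θ n : ℝ) * Sb (n + 1) * 4 ≤ Sa n := by
    intro n h1
    have : θ n = φ n := by simp only [hθ_def]; omega
    rw [this]
    exact hφ_spec n h1 n (le_refl n)
  -- construction of m
  have hex : ∀ j : ℕ, ∃ n, j + 2 ≤ θ n := by
    intro j
    obtain ⟨N, hN⟩ := hφ_unb (j + 2)
    exact ⟨N, le_trans (hN N (le_refl N)) (le_max_right _ _)⟩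
  set n0 : ℕ → ℕ := fun j => Nat.find (hex j) with hn0_def
  have hn0_mono : Monotone n0 := by
    intro i j hij
    exact Nat.find_mono (fun n h => le_trans (by omega) h)
  have hn0_spec : ∀ j, j + 2 ≤ θ (n0 j) := fun j => Nat.find_spec (hex j)
  set m : ℕ → ℕ := fun j => n0 j + j with hm_def
  have hm_strict : StrictMono m := by
    apply strictMono_nat_of_lt_succ
    intro j
    have := hn0_mono (show j ≤ j + 1 by omega)
    simp only [hm_def]
    omega
  refine ⟨m, hm_strict, ?_⟩
  -- the boosted sequence and its partial sums
  set d : ℕ → ℝ := seqM b m with hd_def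
  have hd_le : ∀ n, d n ≤ (θ n : ℝ) * b n := by
    intro n
    have hsub : ((Finset.range (n+1)).filter fun j => m j ≤ n) ⊆ Finset.range (θ n - 1) := by
      intro j hj
      simp only [Finset.mem_filter, Finset.mem_range] at hj ⊢
      have hmj : m j ≤ n := hj.2
      have h1 : n0 j ≤ n := by simp only [hm_def] at hmj; omega
      have h2 : j + 2 ≤ θ n := le_trans (hn0_spec j) (hθ_mono h1)
      omega
    have hcard : ((Finset.range (n+1)).filter fun j => m j ≤ n).card ≤ θ n - 1 := by
      simpa using Finset.card_le_card hsub
    have hmax : (max 1 (((Finset.range (n+1)).filter fun j => m j ≤ n).card)) ≤ θ n :=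
      max_le (hθ_one n) (hcard.trans (Nat.sub_le _ _))
    have hcast : ((max 1 (((Finset.range (n + 1)).filter fun j => m j ≤ n).card) : ℕ) : ℝ)
        ≤ (θ n : ℝ) := by exact_mod_cast hmax
    simp only [hd_def, seqM]
    exact mul_le_mul_of_nonneg_right hcast (hbpos n).le
  have hd_ge : ∀ n, b n ≤ d n := by
    intro n
    have h1 : (1:ℝ) ≤ ((max 1 (((Finset.range (n + 1)).filter fun j => m j ≤ n).card) : ℕ) : ℝ) := by
      exact_mod_cast le_max_left 1 _
    simp only [hd_def, seqM]
    nlinarith [hbpos n]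
  have hd_pos : ∀ n, 0 < d n := fun n => lt_of_lt_of_le (hbpos n) (hd_ge n)
  set E : ℕ → ℝ := fun n => ∑ k ∈ Finset.range (n+1), d k with hE_def
  have hE_pos : ∀ n, 0 < E n := fun n =>
    Finset.sum_pos (fun i _ => hd_pos i) (Finset.nonempty_range_iff.mpr (by omega))
  have hE_mono : Monotone E := by
    apply monotone_nat_of_le_succ
    intro n
    have : E (n+1) = E n + d (n+1) := Finset.sum_range_succ d (n+1)
    nlinarith [hd_pos (n+1)]
  have hE_ge : ∀ n, Sb (n+1) ≤ E n := fun n => Finset.sum_le_sum (fun i _ => hd_ge i)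
  have hE_top : Tendsto E atTop atTop := by
    have h1 : Tendsto (fun n => Sb (n+1)) atTop atTop :=
      (sum_range_tendsto hbpos hbns).comp (tendsto_add_atTop_nat 1)
    exact tendsto_atTop_mono hE_ge h1
  have hE_le : ∀ n, E n ≤ (θ n : ℝ) * Sb (n+1) := by
    intro n
    have h1 : ∀ k ∈ Finset.range (n+1), d k ≤ (θ n : ℝ) * b k := by
      intro k hk
      have hk' : k ≤ n := Nat.lt_succ_iff.mp (Finset.mem_range.mp hk)
      refine le_trans (hd_le k) ?_
      have hθc : ((θ k : ℕ) : ℝ) ≤ (θ n : ℝ) := by exact_mod_cast hθ_mono hk'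
      exact mul_le_mul_of_nonneg_right hθc (hbpos k).le
    calc E n ≤ ∑ k ∈ Finset.range (n+1), (θ n:ℝ) * b k := Finset.sum_le_sum h1
    _ = (θ n:ℝ) * Sb (n+1) := by rw [← Finset.mul_sum]
  have hE_key : ∀ n, 1 ≤ φ n → E n * 4 ≤ Sa n := by
    intro n h
    have h1 := hθ_key n h
    have h2 := hE_le n
    linarith
  have hd_key : ∀ n, 1 ≤ φ n → d n * (4 * ((n:ℝ)+1)) ≤ Sa n := by
    intro n h
    have h1 : ((n:ℝ)+1) * b n ≤ Sb (n+1) := antitone_mul_le_sum hbanti n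
    have h2 := hθ_key n h
    have h3 := hd_le n
    have hθ0 : (0:ℝ) ≤ (θ n : ℝ) := Nat.cast_nonneg _
    have h4 : d n * (4*((n:ℝ)+1)) ≤ ((θ n:ℝ) * b n) * (4*((n:ℝ)+1)) :=
      mul_le_mul_of_nonneg_right h3 (by positivity)
    have h5 : (θ n:ℝ) * (((n:ℝ)+1) * b n) ≤ (θ n:ℝ) * Sb (n+1) :=
      mul_le_mul_of_nonneg_left h1 hθ0
    nlinarith
  -- the Katetov reduction
  have hfe : ∀ n, ∃ j, E n < Sa j := by
    intro n
    obtain ⟨j, hj⟩ := (tendsto_atTop.mp hSa_top (E n + 1)).exists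
    exact ⟨j, by linarith⟩
  set f : ℕ → ℕ := fun n => Nat.find (hfe n) - 1 with hf_def
  have hf_pos : ∀ n, 1 ≤ Nat.find (hfe n) := by
    intro n
    rcases Nat.eq_zero_or_pos (Nat.find (hfe n)) with h | h
    · exfalso
      have hsp := Nat.find_spec (hfe n)
      rw [h] at hsp
      have : Sa 0 = 0 := by simp [hSa_def]
      rw [this] at hsp
      linarith [hE_pos n]
    · exact h
  have hf_succ : ∀ n, f n + 1 = Nat.find (hfe n) := fun n => by
    have := hf_pos n; simp only [hf_def]; omega
  have hf_ub : ∀ n, E n < Sa (f n + 1) := fun n => by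
    rw [hf_succ n]; exact Nat.find_spec (hfe n)
  have hf_lb : ∀ n, Sa (f n) ≤ E n := by
    intro n
    have h1 : f n < Nat.find (hfe n) := by rw [← hf_succ n]; omega
    have h2 := Nat.find_min (hfe n) h1
    linarith [not_lt.mp h2]
  have hf_mono : Monotone f := by
    intro n n' h
    have h1 : Sa (f n) ≤ E n' := le_trans (hf_lb n) (hE_mono h)
    have h2 : E n' < Sa (f n' + 1) := hf_ub n'
    have h3 := hSa_mono.lt_iff_lt.mp (lt_of_le_of_lt h1 h2)
    omega
  -- fiber estimate
  have hfiber : ∀ (j : ℕ) (Fs : Finset ℕ), Fs.Nonempty → (∀ n ∈ Fs, f n = j) →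
      (∀ n ∈ Fs, 1 ≤ φ n) → ∑ n ∈ Fs, d n ≤ 2 * a j := by
    intro j Fs hne hmem hbig
    set n₀ := Fs.min' hne with hn₀
    set n₁ := Fs.max' hne with hn₁
    have hn₀mem : n₀ ∈ Fs := Fs.min'_mem hne
    have hn₁mem : n₁ ∈ Fs := Fs.max'_mem hne
    have h01 : n₀ ≤ n₁ := Fs.min'_le _ hn₁mem
    have hsub : Fs ⊆ Finset.Icc n₀ n₁ := fun x hx =>
      Finset.mem_Icc.mpr ⟨Fs.min'_le x hx, Fs.le_max' x hx⟩
    have h1 : ∑ n ∈ Fs, d n ≤ ∑ n ∈ Finset.Icc n₀ n₁, d n :=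
      Finset.sum_le_sum_of_subset_of_nonneg hsub (fun i _ _ => (hd_pos i).le)
    have h2 : ∑ n ∈ Finset.Icc n₀ n₁, d n = E n₁ - E n₀ + d n₀ := by
      have e1 : ∑ n ∈ Finset.Ico n₀ (n₁+1), d n
          = (∑ n ∈ Finset.range (n₁+1), d n) - ∑ n ∈ Finset.range n₀, d n :=
        Finset.sum_Ico_eq_sub d (by omega)
      have e2 : E n₀ = (∑ n ∈ Finset.range n₀, d n) + d n₀ := Finset.sum_range_succ d n₀
      rw [← Finset.Ico_add_one_right_eq_Icc, e1]
      have e3 : E n₁ = ∑ n ∈ Finset.range (n₁+1), d n := rfl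
      rw [← e3]
      linarith
    have h3 : E n₁ < Sa (j + 1) := by
      have := hf_ub n₁; rwa [hmem n₁ hn₁mem] at this
    have h4 : Sa j ≤ E n₀ := by
      have := hf_lb n₀; rwa [hmem n₀ hn₀mem] at this
    have h5 : Sa (j+1) = Sa j + a j := Finset.sum_range_succ a j
    have h6 : d n₀ ≤ a j := by
      have hφ1 : 1 ≤ φ n₀ := hbig n₀ hn₀mem
      have hE4 : E n₀ * 4 ≤ Sa n₀ := hE_key n₀ hφ1
      have hd4 : d n₀ * (4*((n₀:ℝ)+1)) ≤ Sa n₀ := hd_key n₀ hφ1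
      have hSaj : Sa j * 4 ≤ Sa n₀ := by linarith [hE_pos n₀]
      have hSan₀ : 0 < Sa n₀ := by linarith [hE_pos n₀]
      have hjn : j < n₀ := by
        by_contra hc
        push_neg at hc
        have : Sa n₀ ≤ Sa j := hSa_mono.monotone hc
        linarith [hE_pos n₀]
      have hchunk : Sa n₀ ≤ Sa j + ((n₀ - j : ℕ) : ℝ) * a j := sum_chunk_le haanti (le_of_lt hjn)
      have hcast : ((n₀ - j:ℕ):ℝ) ≤ (n₀ : ℝ) := by exact_mod_cast Nat.sub_le n₀ j
      have hXa : ((n₀ - j:ℕ):ℝ) * a j ≤ (n₀:ℝ) * a j := mul_le_mul_of_nonneg_right hcast (hapos j).le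
      have h3S : 3 * Sa n₀ ≤ 4 * ((n₀:ℝ) * a j) := by linarith
      have hN0 : (0:ℝ) ≤ (n₀:ℝ) := Nat.cast_nonneg _
      have hmid : d n₀ * (4*((n₀:ℝ)+1) * 3) ≤ a j * (4*((n₀:ℝ)+1) * 3) := by
        nlinarith [mul_nonneg hN0 (hapos j).le]
      exact le_of_mul_le_mul_right hmid (show (0:ℝ) < 4 * ((n₀:ℝ)+1) * 3 by positivity)
    linarith
  -- conclusion
  obtain ⟨N₂, hN₂⟩ := hφ_unb 1
  refine ⟨f, fun C hC => ?_⟩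
  have hCind : Summable (C.indicator a) := summable_subtype_iff_indicator.mp hC
  set T₀ : ℝ := ∑' j, C.indicator a j with hT₀
  have key : ∀ N, ∑ n ∈ Finset.range N, (f ⁻¹' C).indicator d n ≤ E N₂ + 2 * T₀ := by
    intro N
    have e0 : ∑ n ∈ Finset.range N, (f ⁻¹' C).indicator d n
        = ∑ n ∈ (Finset.range N).filter (fun n => f n ∈ C), d n := by
      rw [Finset.sum_filter]
      apply Finset.sum_congr rfl
      intro n _
      by_cases h : f n ∈ C
      · simp [Set.indicator_apply, Set.mem_preimage, h]
      · simp [Set.indicator_apply, Set.mem_preimage, h]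
    set s := (Finset.range N).filter (fun n => f n ∈ C) with hs
    set s₂ := s.filter (fun n => ¬ n < N₂) with hs₂
    have e1 : ∑ n ∈ s, d n
        = ∑ n ∈ s.filter (fun n => n < N₂), d n + ∑ n ∈ s₂, d n :=
      (Finset.sum_filter_add_sum_filter_not s _ d).symm
    have e2 : ∑ n ∈ s.filter (fun n => n < N₂), d n ≤ E N₂ := by
      apply Finset.sum_le_sum_of_subset_of_nonneg
      · intro x hx
        have hx' := (Finset.mem_filter.mp hx).2
        exact Finset.mem_range.mpr (by omega)
      · exact fun i _ _ => (hd_pos i).le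
    have e3 : ∑ n ∈ s₂, d n ≤ 2 * T₀ := by
      have hmaps : ∀ n ∈ s₂, f n ∈ s₂.image f := fun n hn => Finset.mem_image_of_mem f hn
      rw [← Finset.sum_fiberwise_of_maps_to hmaps d]
      have hjb : ∀ j ∈ s₂.image f, ∑ n ∈ s₂.filter (fun n => f n = j), d n ≤ 2 * a j := by
        intro j hj
        obtain ⟨n', hn', hfn'⟩ := Finset.mem_image.mp hj
        refine hfiber j _ ⟨n', Finset.mem_filter.mpr ⟨hn', hfn'⟩⟩ ?_ ?_
        · intro n hn; exact (Finset.mem_filter.mp hn).2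
        · intro n hn
          have hns₂ : n ∈ s₂ := (Finset.mem_filter.mp hn).1
          have hnN : ¬ n < N₂ := (Finset.mem_filter.mp hns₂).2
          exact hN₂ n (by omega)
      calc ∑ j ∈ s₂.image f, ∑ n ∈ s₂.filter (fun n => f n = j), d n
          ≤ ∑ j ∈ s₂.image f, 2 * a j := Finset.sum_le_sum hjb
        _ = 2 * ∑ j ∈ s₂.image f, a j := by rw [Finset.mul_sum]
        _ ≤ 2 * T₀ := by
            have hq1 : ∑ j ∈ s₂.image f, a j = ∑ j ∈ s₂.image f, C.indicator a j := by
              apply Finset.sum_congr rfl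
              intro j hj
              obtain ⟨n', hn', rfl⟩ := Finset.mem_image.mp hj
              have hmem : f n' ∈ C := (Finset.mem_filter.mp ((Finset.mem_filter.mp hn').1)).2
              rw [Set.indicator_of_mem hmem]
            have hq2 : ∑ j ∈ s₂.image f, C.indicator a j ≤ T₀ :=
              Summable.sum_le_tsum _ (fun i _ => Set.indicator_nonneg (fun k _ => (hapos k).le) i) hCind
            linarith
    rw [e0]
    linarith
  have hsum : Summable ((f ⁻¹' C).indicator d) :=
    summable_of_sum_range_le (fun n => Set.indicator_nonneg (fun k _ => (hd_pos k).le) n) key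
  exact summable_subtype_iff_indicator.mpr hsum

private lemma sum_biUnion_le_nonneg {f : ℕ → ℝ} (h0 : ∀ n, 0 ≤ f n) (Cs : ℕ → Finset ℕ) :
    ∀ T : ℕ, ∑ x ∈ (Finset.range T).biUnion Cs, f x ≤ ∑ K ∈ Finset.range T, ∑ x ∈ Cs K, f x := by
  intro T
  induction T with
  | zero => simp
  | succ T ih =>
    rw [Finset.range_add_one, Finset.biUnion_insert,
      Finset.sum_insert Finset.notMem_range_self]
    calc ∑ x ∈ Cs T ∪ (Finset.range T).biUnion Cs, f x
        ≤ ∑ x ∈ Cs T, f x + ∑ x ∈ (Finset.range T).biUnion Cs, f x :=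
          sum_union_le_nonneg h0 _ _
      _ ≤ ∑ x ∈ Cs T, f x + ∑ K ∈ Finset.range T, ∑ x ∈ Cs K, f x := by linarith


private lemma exists_chunk {a : ℕ → ℝ} {ε : ℝ} (hε : 0 < ε) :
    ∀ (C : Finset ℕ), (∀ j ∈ C, a j ≤ ε/2) → ε/2 ≤ ∑ j ∈ C, a j →
    ∃ C₁, C₁ ⊆ C ∧ ε/2 ≤ ∑ j ∈ C₁, a j ∧ ∑ j ∈ C₁, a j ≤ ε := by
  intro C
  induction C using Finset.induction_on with
  | empty =>
    intro _ h
    refine ⟨∅, le_refl _, h, ?_⟩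
    simp only [Finset.sum_empty]
    linarith
  | insert x s hx ih =>
    intro hsmall hsum
    by_cases h : ε/2 ≤ ∑ j ∈ s, a j
    · obtain ⟨C₁, hs, h1, h2⟩ := ih (fun j hj => hsmall j (Finset.mem_insert_of_mem hj)) h
      exact ⟨C₁, hs.trans (Finset.subset_insert x s), h1, h2⟩
    · push_neg at h
      refine ⟨insert x s, le_refl _, hsum, ?_⟩
      rw [Finset.sum_insert hx] at *
      have := hsmall x (Finset.mem_insert_self x s)
      linarith

private lemma cesaro_case (a b : ℕ → ℝ) (haanti : Antitone a) (hapos : ∀ n, 0 < a n)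
    (hbpos : ∀ n, 0 < b n) (hb0 : Tendsto b atTop (nhds 0))
    (hna : ¬ Tendsto a atTop (nhds 0)) : PartialSumsLittleO a b := by
  have hbdd : BddBelow (Set.range a) := ⟨0, by rintro x ⟨n, rfl⟩; exact (hapos n).le⟩
  have hL : Tendsto a atTop (nhds (⨅ n, a n)) := tendsto_atTop_ciInf haanti hbdd
  set L := ⨅ n, a n with hLdef
  have hL0 : 0 ≤ L := le_ciInf (fun n => (hapos n).le)
  have hLne : L ≠ 0 := fun h => hna (h ▸ hL)
  have hLpos : 0 < L := lt_of_le_of_ne hL0 (Ne.symm hLne)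
  have hlow : ∀ n, L ≤ a n := fun n => ciInf_le hbdd n
  have hSa : ∀ n : ℕ, (n:ℝ) * L ≤ ∑ k ∈ Finset.range n, a k := by
    intro n
    calc (n:ℝ) * L = ∑ _k ∈ Finset.range n, L := by
          rw [Finset.sum_const, nsmul_eq_mul, Finset.card_range]
      _ ≤ ∑ k ∈ Finset.range n, a k := Finset.sum_le_sum (fun k _ => hlow k)
  have hces : Tendsto (fun n : ℕ => (n:ℝ)⁻¹ * ∑ k ∈ Finset.range n, b k) atTop (nhds 0) :=
    hb0.cesaro
  have hces2 : Tendsto (fun n : ℕ => L⁻¹ * ((n:ℝ)⁻¹ * ∑ k ∈ Finset.range n, b k)) atTop (nhds 0) := by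
    have := hces.const_mul L⁻¹
    simpa using this
  refine squeeze_zero' ?_ ?_ hces2
  · filter_upwards [eventually_ge_atTop 1] with n hn
    have h1 : 0 < ∑ k ∈ Finset.range n, a k := sum_range_pos hapos hn
    have h3 : 0 ≤ ∑ k ∈ Finset.range n, b k :=
      Finset.sum_nonneg (fun k _ => (hbpos k).le)
    positivity
  · filter_upwards [eventually_ge_atTop 1] with n hn
    have h1 : 0 < ∑ k ∈ Finset.range n, a k := sum_range_pos hapos hn
    have hn1 : (1:ℝ) ≤ (n:ℝ) := by exact_mod_cast hn
    have h2 : 0 < (n:ℝ) * L := by positivity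
    have h3 : 0 ≤ ∑ k ∈ Finset.range n, b k :=
      Finset.sum_nonneg (fun k _ => (hbpos k).le)
    have h4 : (∑ k ∈ Finset.range n, b k) / (∑ k ∈ Finset.range n, a k)
        ≤ (∑ k ∈ Finset.range n, b k) / ((n:ℝ) * L) :=
      div_le_div_of_nonneg_left h3 h2 (hSa n)
    have h5 : (∑ k ∈ Finset.range n, b k) / ((n:ℝ) * L)
        = L⁻¹ * ((n:ℝ)⁻¹ * ∑ k ∈ Finset.range n, b k) := by
      rw [div_eq_mul_inv, mul_inv]; ring
    rw [h5] at h4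
    exact h4

private lemma forward_dir (a b : ℕ → ℝ) (haanti : Antitone a) (hapos : ∀ n, 0 < a n)
    (hans : ¬ Summable a) (hbanti : Antitone b) (hbpos : ∀ n, 0 < b n)
    (hb0 : Tendsto b atTop (nhds 0)) (m : ℕ → ℕ) (hm : StrictMono m) (f : ℕ → ℕ)
    (H : ∀ C ∈ IdealOf a, f ⁻¹' C ∈ IdealOf (seqM b m)) : PartialSumsLittleO a b := by
  classical
  by_cases ha0 : Tendsto a atTop (nhds 0)
  swap
  · exact cesaro_case a b haanti hapos hbpos hb0 ha0
  set Sa : ℕ → ℝ := fun n => ∑ k ∈ Finset.range n, a k with hSa_def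
  set Sb : ℕ → ℝ := fun n => ∑ k ∈ Finset.range n, b k with hSb_def
  have hSa_pos : ∀ n, 1 ≤ n → 0 < Sa n := fun n hn => sum_range_pos hapos hn
  have hSb_nonneg : ∀ n, 0 ≤ Sb n := fun n =>
    Finset.sum_nonneg (fun i _ => (hbpos i).le)
  have hSa_top : Tendsto Sa atTop atTop := sum_range_tendsto hapos hans
  set d : ℕ → ℝ := seqM b m with hd_def
  have hd_ge : ∀ n, b n ≤ d n := by
    intro n
    have h1 : (1:ℝ) ≤ ((max 1 (((Finset.range (n + 1)).filter fun j => m j ≤ n).card) : ℕ) : ℝ) := by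
      exact_mod_cast le_max_left 1 _
    simp only [hd_def, seqM]
    nlinarith [hbpos n]
  have hd_pos : ∀ n, 0 < d n := fun n => lt_of_lt_of_le (hbpos n) (hd_ge n)
  have hd_big : ∀ R n, m R ≤ n → ((R:ℝ) + 1) * b n ≤ d n := by
    intro R n hRn
    have hsub : Finset.range (R+1) ⊆ (Finset.range (n+1)).filter (fun j => m j ≤ n) := by
      intro j hj
      have hjR : j ≤ R := Nat.lt_succ_iff.mp (Finset.mem_range.mp hj)
      have h1 : m j ≤ m R := hm.monotone hjR
      have h2 : j ≤ m j := hm.le_apply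
      exact Finset.mem_filter.mpr ⟨Finset.mem_range.mpr (by omega), by omega⟩
    have hcard : R + 1 ≤ ((Finset.range (n+1)).filter (fun j => m j ≤ n)).card := by
      simpa using Finset.card_le_card hsub
    have hcard' : R + 1 ≤ max 1 (((Finset.range (n+1)).filter (fun j => m j ≤ n)).card) :=
      le_trans hcard (le_max_right _ _)
    have hcast : ((R:ℝ) + 1) ≤ ((max 1 (((Finset.range (n + 1)).filter fun j => m j ≤ n).card) : ℕ) : ℝ) := by
      exact_mod_cast hcard'
    simp only [hd_def, seqM]
    exact mul_le_mul_of_nonneg_right hcast (hbpos n).le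
  -- fiber sums
  have hgsummable : ∀ j : ℕ, Summable ((f ⁻¹' {j}).indicator d) := by
    intro j
    have h1 : ({j} : Set ℕ) ∈ IdealOf a := by
      have : Finite ↥({j} : Set ℕ) := (Set.finite_singleton j).to_subtype
      exact Summable.of_finite
    exact summable_subtype_iff_indicator.mp (H _ h1)
  set g : ℕ → ℝ := fun j => ∑' n, ((f ⁻¹' {j}).indicator d) n with hg_def
  have hg_nonneg : ∀ j, 0 ≤ g j := fun j =>
    tsum_nonneg (fun i => Set.indicator_nonneg (fun k _ => (hd_pos k).le) i)
  have hg_partial : ∀ (j : ℕ) (t : Finset ℕ), (∀ n ∈ t, f n = j) → ∑ n ∈ t, d n ≤ g j := by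
    intro j t ht
    have h1 : ∑ n ∈ t, d n = ∑ n ∈ t, ((f ⁻¹' {j}).indicator d) n := by
      apply Finset.sum_congr rfl
      intro n hn
      rw [Set.indicator_of_mem (by simp [ht n hn] : n ∈ f ⁻¹' {j})]
    rw [h1]
    exact Summable.sum_le_tsum t (fun i _ => Set.indicator_nonneg (fun k _ => (hd_pos k).le) i)
      (hgsummable j)
  -- Step A: uniform bound
  have stepA : ∃ K : ℕ, ∀ Cf : Finset ℕ,
      (∑ j ∈ Cf, a j ≤ (1/2:ℝ)^(K+1)) → ∑ j ∈ Cf, g j ≤ (K:ℝ) := by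
    by_contra hcon
    push_neg at hcon
    choose Cs hCa hCg using hcon
    set U : Set ℕ := ⋃ K, (Cs K : Set ℕ) with hU
    have hCsU : ∀ K, (Cs K : Set ℕ) ⊆ U := fun K => Set.subset_iUnion (fun K => (Cs K : Set ℕ)) K
    have hUsum : Summable (U.indicator a) := by
      apply summable_of_sum_range_le (c := 1)
        (fun n => Set.indicator_nonneg (fun k _ => (hapos k).le) n)
      intro N
      have e0 : ∑ n ∈ Finset.range N, U.indicator a n
          = ∑ n ∈ (Finset.range N).filter (fun n => n ∈ U), a n := by
        rw [Finset.sum_filter]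
        apply Finset.sum_congr rfl
        intro n _
        by_cases h : n ∈ U
        · simp [Set.indicator_apply, h]
        · simp [Set.indicator_apply, h]
      rw [e0]
      set F := (Finset.range N).filter (fun n => n ∈ U) with hF
      set w : ℕ → ℕ := fun x => if h : ∃ K, x ∈ Cs K then Nat.find h else 0 with hw
      set T := F.sup w with hT
      have hsubF : F ⊆ (Finset.range (T+1)).biUnion Cs := by
        intro x hx
        have hxU : x ∈ U := (Finset.mem_filter.mp hx).2
        have hx' : ∃ K, x ∈ Cs K := by
          simpa [hU, Set.mem_iUnion] using hxU
        refine Finset.mem_biUnion.mpr ⟨w x, ?_, ?_⟩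
        · exact Finset.mem_range.mpr (Nat.lt_succ_of_le (Finset.le_sup hx))
        · simp only [hw, dif_pos hx']
          exact Nat.find_spec hx'
      calc ∑ x ∈ F, a x ≤ ∑ x ∈ (Finset.range (T+1)).biUnion Cs, a x :=
            Finset.sum_le_sum_of_subset_of_nonneg hsubF (fun i _ _ => (hapos i).le)
        _ ≤ ∑ K ∈ Finset.range (T+1), ∑ x ∈ Cs K, a x :=
            sum_biUnion_le_nonneg (fun n => (hapos n).le) Cs (T+1)
        _ ≤ ∑ K ∈ Finset.range (T+1), (1/2:ℝ)^(K+1) :=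
            Finset.sum_le_sum (fun K _ => hCa K)
        _ ≤ 1 := geom_half_sum_le_one _
    have hUIdeal : U ∈ IdealOf a := summable_subtype_iff_indicator.mpr hUsum
    have hUdind : Summable ((f ⁻¹' U).indicator d) :=
      summable_subtype_iff_indicator.mp (H U hUIdeal)
    set G : ℝ := ∑' n, (f ⁻¹' U).indicator d n with hG
    obtain ⟨K, hK⟩ := exists_nat_gt G
    have hle : ∑ j ∈ Cs K, g j ≤ G := by
      have h2 : ∑ j ∈ Cs K, g j = ∑' n, ∑ j ∈ Cs K, ((f ⁻¹' {j}).indicator d) n :=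
        (Summable.tsum_finsetSum (fun j _ => hgsummable j)).symm
      rw [h2]
      have hsl : Summable (fun n => ∑ j ∈ Cs K, ((f ⁻¹' {j}).indicator d) n) :=
        summable_sum (fun j _ => hgsummable j)
      refine Summable.tsum_le_tsum ?_ hsl hUdind
      intro n
      have e1 : ∑ j ∈ Cs K, ((f ⁻¹' {j}).indicator d) n
          = if f n ∈ Cs K then d n else 0 := by
        rw [← Finset.sum_ite_eq' (Cs K) (f n) (fun _ => d n)]
        apply Finset.sum_congr rfl
        intro j _
        by_cases h : f n = j
        · simp [Set.indicator_apply, h, eq_comm]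
        · simp [Set.indicator_apply, h, Ne.symm h]
      rw [e1]
      by_cases h : f n ∈ Cs K
      · rw [if_pos h]
        have : n ∈ f ⁻¹' U := hCsU K h
        rw [Set.indicator_of_mem this]
      · rw [if_neg h]
        exact Set.indicator_nonneg (fun k _ => (hd_pos k).le) n
    have := hCg K
    linarith
  obtain ⟨K, hKbound⟩ := stepA
  set ε : ℝ := (1/2:ℝ)^(K+1) with hε
  have hεpos : 0 < ε := by positivity
  -- Step B: linear bound
  have stepB : ∀ (n : ℕ) (Cf : Finset ℕ), Cf.card ≤ n → (∀ j ∈ Cf, a j ≤ ε/2) →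
      ∑ j ∈ Cf, g j ≤ (K:ℝ) * (2/ε * ∑ j ∈ Cf, a j + 1) := by
    intro n
    induction n with
    | zero =>
      intro Cf hc _
      have hCf : Cf = ∅ := Finset.card_eq_zero.mp (by omega)
      subst hCf
      simp only [Finset.sum_empty, mul_zero, zero_add, mul_one]
      positivity
    | succ n ih =>
      intro Cf hc hsm
      by_cases hbig : ∑ j ∈ Cf, a j ≤ ε
      · have h1 := hKbound Cf hbig
        have h2 : 0 ≤ ∑ j ∈ Cf, a j := Finset.sum_nonneg fun j _ => (hapos j).le
        have hK0 : (0:ℝ) ≤ (K:ℝ) := Nat.cast_nonneg K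
        nlinarith [mul_nonneg (mul_nonneg hK0 (by positivity : (0:ℝ) ≤ 2/ε)) h2]
      · push_neg at hbig
        have hhalf : ε/2 ≤ ∑ j ∈ Cf, a j := by linarith
        obtain ⟨C₁, hsub, hge, hle⟩ := exists_chunk hεpos Cf hsm hhalf
        have hne : C₁.Nonempty := by
          rcases C₁.eq_empty_or_nonempty with h | h
          · exfalso; rw [h] at hge; simp only [Finset.sum_empty] at hge; linarith
          · exact h
        have hcard : (Cf \ C₁).card ≤ n := by
          have h1 : 1 ≤ C₁.card := Finset.card_pos.mpr hne
          have h2 : C₁.card ≤ Cf.card := Finset.card_le_card hsub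
          have h3 := Finset.card_sdiff_of_subset hsub
          omega
        have h2 := ih (Cf \ C₁) hcard (fun j hj => hsm j (Finset.mem_sdiff.mp hj).1)
        have h3 : ∑ j ∈ Cf \ C₁, g j + ∑ j ∈ C₁, g j = ∑ j ∈ Cf, g j := Finset.sum_sdiff hsub
        have h4 : ∑ j ∈ Cf \ C₁, a j + ∑ j ∈ C₁, a j = ∑ j ∈ Cf, a j := Finset.sum_sdiff hsub
        have h5 : ∑ j ∈ C₁, g j ≤ (K:ℝ) := hKbound C₁ hle
        have h7 : (K:ℝ) ≤ (K:ℝ) * (2/ε) * ∑ j ∈ C₁, a j := by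
          have hmm := mul_le_mul_of_nonneg_left hge
            (by positivity : (0:ℝ) ≤ (K:ℝ)*(2/ε))
          calc (K:ℝ) = (K:ℝ)*(2/ε)*(ε/2) := by field_simp
            _ ≤ _ := hmm
        have h6 : (K:ℝ)*(2/ε)*(∑ j ∈ Cf \ C₁, a j)
            = (K:ℝ)*(2/ε)*(∑ j ∈ Cf, a j) - (K:ℝ)*(2/ε)*(∑ j ∈ C₁, a j) := by
          rw [← h4]; ring
        nlinarith [h2, h3, h5, h6, h7]
  -- Step C: contradiction
  rw [PartialSumsLittleO]
  by_contra hT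
  rw [Metric.tendsto_atTop] at hT
  push_neg at hT
  obtain ⟨δ, hδpos, hfreq⟩ := hT
  have hsmall : ∀ᶠ j in atTop, a j < ε/2 := ha0.eventually (gt_mem_nhds (by positivity))
  obtain ⟨N₄, hN₄⟩ := eventually_atTop.mp hsmall
  set G₄ : ℝ := ∑ j ∈ Finset.range N₄, g j with hG₄
  have hupper : ∀ N, ∑ n ∈ Finset.range N, d n ≤ G₄ + (K:ℝ) * (2/ε * Sa N + 1) := by
    intro N
    set t := (Finset.range N).image f with ht
    have hmaps : ∀ n ∈ Finset.range N, f n ∈ t := fun n hn => Finset.mem_image_of_mem f hn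
    rw [← Finset.sum_fiberwise_of_maps_to hmaps d]
    have h1 : ∑ j ∈ t, ∑ n ∈ (Finset.range N).filter (fun n => f n = j), d n
        ≤ ∑ j ∈ t, g j :=
      Finset.sum_le_sum (fun j _ => hg_partial j _ (fun n hn => (Finset.mem_filter.mp hn).2))
    have h2 : ∑ j ∈ t, g j = ∑ j ∈ t.filter (fun j => j < N₄), g j
        + ∑ j ∈ t.filter (fun j => ¬ j < N₄), g j :=
      (Finset.sum_filter_add_sum_filter_not t _ g).symm
    have h3 : ∑ j ∈ t.filter (fun j => j < N₄), g j ≤ G₄ := by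
      apply Finset.sum_le_sum_of_subset_of_nonneg
      · intro x hx
        exact Finset.mem_range.mpr (Finset.mem_filter.mp hx).2
      · exact fun i _ _ => hg_nonneg i
    set C2 := t.filter (fun j => ¬ j < N₄) with hC2
    have h4 : ∑ j ∈ C2, g j ≤ (K:ℝ) * (2/ε * (∑ j ∈ C2, a j) + 1) := by
      refine stepB C2.card C2 (le_refl _) (fun j hj => ?_)
      have hj' : ¬ j < N₄ := (Finset.mem_filter.mp hj).2
      exact (hN₄ j (by omega)).le
    have h5 : ∑ j ∈ C2, a j ≤ Sa N := by
      have hc1 : C2.card ≤ N := by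
        have e1 : C2.card ≤ t.card := Finset.card_le_card (Finset.filter_subset _ t)
        have e2 : t.card ≤ N := le_trans Finset.card_image_le (by simp)
        omega
      calc ∑ j ∈ C2, a j ≤ ∑ i ∈ Finset.range C2.card, a i :=
            sum_finset_le_sum_range haanti (fun n => (hapos n).le) C2
        _ ≤ Sa N := Finset.sum_le_sum_of_subset_of_nonneg
            (by intro x hx; simp only [Finset.mem_range] at hx ⊢; omega)
            (fun i _ _ => (hapos i).le)
    have h6 : (K:ℝ) * (2/ε * (∑ j ∈ C2, a j) + 1) ≤ (K:ℝ) * (2/ε * Sa N + 1) := by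
      apply mul_le_mul_of_nonneg_left _ (Nat.cast_nonneg K)
      have := mul_le_mul_of_nonneg_left h5 (by positivity : (0:ℝ) ≤ 2/ε)
      linarith
    linarith
  obtain ⟨R, hR⟩ := exists_nat_gt (((K:ℝ)*(2/ε) + 1)/δ)
  have hRδ : (K:ℝ)*(2/ε) + 1 < (R:ℝ)*δ := by
    rw [div_lt_iff₀ hδpos] at hR
    linarith
  have hlower : ∀ N, m R ≤ N → (R:ℝ) * (Sb N - Sb (m R)) ≤ ∑ n ∈ Finset.range N, d n := by
    intro N hN
    have h1 : ∑ n ∈ Finset.Ico (m R) N, d n ≤ ∑ n ∈ Finset.range N, d n := by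
      apply Finset.sum_le_sum_of_subset_of_nonneg
      · intro x hx
        simp only [Finset.mem_Ico] at hx
        exact Finset.mem_range.mpr hx.2
      · exact fun i _ _ => (hd_pos i).le
    have h2 : ∀ n ∈ Finset.Ico (m R) N, (R:ℝ) * b n ≤ d n := by
      intro n hn
      have := hd_big R n (Finset.mem_Ico.mp hn).1
      nlinarith [hbpos n]
    have h3 : (R:ℝ) * (Sb N - Sb (m R)) = ∑ n ∈ Finset.Ico (m R) N, (R:ℝ) * b n := by
      rw [← Finset.mul_sum, Finset.sum_Ico_eq_sub _ hN]
    rw [h3]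
    exact le_trans (Finset.sum_le_sum h2) h1
  set Cst : ℝ := G₄ + (K:ℝ) + (R:ℝ) * Sb (m R) with hCst
  obtain ⟨N₆, hN₆⟩ := eventually_atTop.mp (hSa_top.eventually_gt_atTop Cst)
  obtain ⟨N, hN1, hN2⟩ := hfreq (max (max (m R) N₆) 1)
  have hNm : m R ≤ N := le_trans (le_trans (le_max_left _ _) (le_max_left _ _)) hN1
  have hNN₆ : N₆ ≤ N := le_trans (le_trans (le_max_right _ _) (le_max_left _ _)) hN1
  have hNone : 1 ≤ N := le_trans (le_max_right _ _) hN1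
  have hSaN : 0 < Sa N := hSa_pos N hNone
  have hratio : δ ≤ Sb N / Sa N := by
    have hN2' : δ ≤ dist (Sb N / Sa N) 0 := hN2
    have e1 : dist (Sb N / Sa N) 0 = |Sb N / Sa N| := Real.dist_0_eq_abs _
    have e2 : |Sb N / Sa N| = Sb N / Sa N :=
      abs_of_nonneg (div_nonneg (hSb_nonneg N) hSaN.le)
    rw [e1, e2] at hN2'
    exact hN2'
  have hbN : δ * Sa N ≤ Sb N := by
    rw [le_div_iff₀ hSaN] at hratio
    linarith
  have hup := hupper N
  have hlo := hlower N hNm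
  have hSaCst : Cst < Sa N := hN₆ N hNN₆
  have hfinal : (R:ℝ)*δ*Sa N ≤ (K:ℝ)*(2/ε)*Sa N + Cst := by
    have h1 : (R:ℝ)*(δ*Sa N) ≤ (R:ℝ)*Sb N :=
      mul_le_mul_of_nonneg_left hbN (Nat.cast_nonneg R)
    nlinarith [hup, hlo]
  have hmul : ((K:ℝ)*(2/ε)+1)*Sa N ≤ (R:ℝ)*δ*Sa N :=
    mul_le_mul_of_nonneg_right hRδ.le hSaN.le
  nlinarith [hmul, hfinal, hSaCst, hSaN]

/-- For Waterman sequences `A`, `B` with `B` proper: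
`I_A ≤_K I_{B^M}` for some increasing `M` iff `∑_{k≤n} b_k = o(∑_{k≤n} a_k)`. -/
theorem stmt3 (a b : ℕ → ℝ) (hA : IsWaterman a) (hB : IsProperWaterman b) :
    (∃ m : ℕ → ℕ, StrictMono m ∧ KatetovLE (IdealOf a) (IdealOf (seqM b m))) ↔
      PartialSumsLittleO a b := by
  obtain ⟨haanti, hapos, hans⟩ := hA
  obtain ⟨⟨hbanti, hbpos, hbns⟩, hb0⟩ := hB
  constructor
  · rintro ⟨m, hm, f, hf⟩
    exact forward_dir a b haanti hapos hans hbanti hbpos hb0 m hm f hf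
  · intro hlo
    exact backward_dir a b haanti hapos hans hbanti hbpos hbns hlo
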